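/- Let u ∈ M_{n,ℓ,t} with ℓ < d and let a = |M_{n,ℓ,t} \ L_t^i(u)|. Then |M_{n,ℓ+1,t} \ Shad_t(L_t^i(u))| = a^{(n,ℓ,t)}, where a^{(n,ℓ,t)} = Σ_{j=p+1}^{ℓ+1} C(a_{j-1} + 1 - t_ℓ, j) and a = Σ_{j=p}^{ℓ} C(a_j, j) is the Macaulay expansion of a with respect to ℓ. -/

import Mathlib

open Multiset Finset

/-- A monomial in `K[x_1,…,x_n]` is encoded by the multiset of its variable
indices (each index lies in `[1, n]`).  `TSpread n d t u` says that `u` is a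
t-spread monomial: its degree is at most `d`, its indices lie in `[1,n]`, and
consecutive indices `j_k ≤ j_{k+1}` of its sorted index list satisfy
`j_{k+1} - j_k ≥ t_k` (here `t 1 = t_1, …, t (d-1) = t_{d-1}`). -/
def TSpread (n d : ℕ) (t : ℕ → ℕ) (u : Multiset ℕ) : Prop :=
  u.card ≤ d ∧ (∀ i ∈ u, 1 ≤ i ∧ i ≤ n) ∧
    ∀ k : ℕ, k + 1 < u.card →
      (u.sort (· ≤ ·)).getD k 0 + t (k + 1) ≤ (u.sort (· ≤ ·)).getD (k + 1) 0

/-- `Mset n d ℓ t` : the set `M_{n,ℓ,t}` of t-spread monomials of degree `ℓ`. -/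
def Mset (n d ℓ : ℕ) (t : ℕ → ℕ) : Set (Multiset ℕ) :=
  {u | TSpread n d t u ∧ u.card = ℓ}

/-- the t-spread shadow `Shad_t(L) = {x_i w : w ∈ L, x_i w t-spread, i = 1..n}`. -/
def Shad (n d : ℕ) (t : ℕ → ℕ) (L : Set (Multiset ℕ)) : Set (Multiset ℕ) :=
  {v | ∃ w ∈ L, ∃ i, 1 ≤ i ∧ i ≤ n ∧ v = i ::ₘ w ∧ TSpread n d t v}

/-- largest variable index dividing `u` (0 for the constant monomial). -/
def maxVar (u : Multiset ℕ) : ℕ := (u.sort (· ≤ ·)).getLastD 0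

/-- `lexGE u v` : `u ≥_lex v` for monomials of equal degree, where the
lexicographic order is induced by `x_1 > x_2 > ⋯ > x_n`. -/
def lexGE (u v : Multiset ℕ) : Prop :=
  u = v ∨ List.Lex (· < ·) (u.sort (· ≤ ·)) (v.sort (· ≤ ·))

/-- `L` is a t-spread strongly stable set. -/
def StronglyStableSet (n d : ℕ) (t : ℕ → ℕ) (L : Set (Multiset ℕ)) : Prop :=
  ∀ u ∈ L, ∀ i ∈ u, ∀ j : ℕ, 1 ≤ j → j < i →
    TSpread n d t (j ::ₘ u.erase i) → (j ::ₘ u.erase i) ∈ L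

/-- `L` is a t-spread lex set (inside `M_{n,ℓ,t}`). -/
def LexSet (n d ℓ : ℕ) (t : ℕ → ℕ) (L : Set (Multiset ℕ)) : Prop :=
  ∀ u ∈ L, ∀ v ∈ Mset n d ℓ t, lexGE v u → v ∈ L

/-- `m_i(L)` : number of monomials of `L` with largest variable index `i`. -/
noncomputable def mEq (i : ℕ) (L : Set (Multiset ℕ)) : ℕ :=
  {u ∈ L | maxVar u = i}.ncard

/-- `m_{≤ i}(L)` : number of monomials of `L` with largest variable index `≤ i`. -/
noncomputable def mLe (i : ℕ) (L : Set (Multiset ℕ)) : ℕ :=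
  {u ∈ L | maxVar u ≤ i}.ncard

/-- `I` is (the set of monomials of) a monomial ideal of `K[x_1,…,x_n]`. -/
def MonIdeal (n : ℕ) (I : Set (Multiset ℕ)) : Prop :=
  (∀ u ∈ I, ∀ i ∈ u, 1 ≤ i ∧ i ≤ n) ∧
    ∀ u ∈ I, ∀ i : ℕ, 1 ≤ i → i ≤ n → (i ::ₘ u) ∈ I

/-- `I` is generated by t-spread monomials. -/
def TSpreadGen (n d : ℕ) (t : ℕ → ℕ) (I : Set (Multiset ℕ)) : Prop :=
  ∀ u ∈ I, ∃ v ∈ I, TSpread n d t v ∧ v ≤ u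

/-- The t-spread operator `a ↦ a^{(n,ℓ,t)}`:  if `a = Σ_{j=p}^{ℓ} C(a_j, j)` is
the Macaulay expansion of `a` with respect to `ℓ`, then
`tOp t_ℓ ℓ a = Σ_{j=p+1}^{ℓ+1} C(a_{j-1} + 1 - t_ℓ, j)`, computed greedily. -/
noncomputable def tOp (s : ℕ) : ℕ → ℕ → ℕ
  | 0, _ => 0
  | ℓ + 1, a =>
    if a = 0 then 0
    else
      (sSup {b | Nat.choose b (ℓ + 1) ≤ a} + 1 - s).choose (ℓ + 2) +
        tOp s ℓ (a - Nat.choose (sSup {b | Nat.choose b (ℓ + 1) ≤ a}) (ℓ + 1))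

/-- The graded Betti number `β_{i,j}(I)` of a t-spread strongly stable ideal,
via the Eliahou–Kervaire-type formula
`β_{i,i+q}(I) = Σ_{u ∈ G(I)_q} C(max(u) - 1 - Σ_{h=1}^{q-1} t_h, i)`. -/
noncomputable def betti (t : ℕ → ℕ) (I : Set (Multiset ℕ)) (i j : ℕ) : ℕ :=
  ∑ᶠ u ∈ {u ∈ I | u.card = j - i ∧ ∀ v ∈ I, v ≤ u → v = u},
    (maxVar u - 1 - ∑ h ∈ Finset.Icc 1 (j - i - 1), t h).choose i

namespace Stmt12



/-- strict lexicographic comparison for lists (first |g| entries). -/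
def LLex : List ℕ → List ℕ → Prop
  | [], _ => False
  | _ :: _, [] => False
  | x :: g, y :: l => x < y ∨ (x = y ∧ LLex g l)

lemma llex_irrefl : ∀ l, ¬ LLex l l := by
  intro l
  induction l with
  | nil => exact fun h => h
  | cons x l ih =>
    rintro (h | ⟨-, h⟩)
    · omega
    · exact ih h

lemma llex_trans : ∀ {a b c : List ℕ}, LLex a b → LLex b c → LLex a c := by
  intro a
  induction a with
  | nil => intro b c h; exact h.elim
  | cons x a ih =>
    intro b c h1 h2
    cases b with
    | nil => exact h1.elim
    | cons y b =>
      cases c with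
      | nil => exact h2.elim
      | cons z c =>
        rcases h1 with h1 | ⟨rfl, h1⟩ <;> rcases h2 with h2 | ⟨rfl, h2⟩
        · exact Or.inl (h1.trans h2)
        · exact Or.inl h1
        · exact Or.inl h2
        · exact Or.inr ⟨rfl, ih h1 h2⟩

lemma llex_asymm {a b : List ℕ} (h1 : LLex a b) (h2 : LLex b a) : False :=
  llex_irrefl a (llex_trans h1 h2)

lemma llex_toLex : ∀ {a b : List ℕ}, LLex a b → List.Lex (· < ·) a b := by
  intro a
  induction a with
  | nil => intro b h; exact h.elim
  | cons x a ih =>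
    intro b h
    cases b with
    | nil => exact h.elim
    | cons y b =>
      rcases h with h | ⟨rfl, h⟩
      · exact List.Lex.rel h
      · exact List.Lex.cons (ih h)

lemma llex_ofLex : ∀ {a b : List ℕ}, a.length = b.length →
    List.Lex (· < ·) a b → LLex a b := by
  intro a
  induction a with
  | nil => intro b hl h; cases b with
           | nil => exact absurd h (by intro h; cases h)
           | cons y b => simp at hl
  | cons x a ih =>
    intro b hl h
    cases b with
    | nil => simp at hl
    | cons y b =>
      cases h with
      | rel h => exact Or.inl h
      | cons h => exact Or.inr ⟨rfl, ih (by simpa using hl) h⟩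

lemma llex_trichotomy : ∀ (a b : List ℕ), a.length = b.length →
    a = b ∨ LLex a b ∨ LLex b a := by
  intro a
  induction a with
  | nil => intro b hl; cases b with
           | nil => exact Or.inl rfl
           | cons y b => simp at hl
  | cons x a ih =>
    intro b hl
    cases b with
    | nil => simp at hl
    | cons y b =>
      rcases Nat.lt_trichotomy x y with h | rfl | h
      · exact Or.inr (Or.inl (Or.inl h))
      · rcases ih b (by simpa using hl) with rfl | h | h
        · exact Or.inl rfl
        · exact Or.inr (Or.inl (Or.inr ⟨rfl, h⟩))
        · exact Or.inr (Or.inr (Or.inr ⟨rfl, h⟩))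
      · exact Or.inr (Or.inr (Or.inl h))

lemma llex_take : ∀ (a b : List ℕ), (LLex a (b.take a.length) ↔ LLex a b) := by
  intro a
  induction a with
  | nil => intro b; simp [LLex]
  | cons x a ih =>
    intro b
    cases b with
    | nil => simp [List.take, LLex]
    | cons y b =>
      simp only [List.length_cons, List.take_succ_cons, LLex]
      rw [ih b]


variable (n : ℕ) (t : ℕ → ℕ)


/-- `Gap n t s i l` : `l` is a list `x₁ ≤ x₂ ≤ …` with `x₁ ≥ s`, all entries `≤ n`,
and `x_{k+1} ≥ x_k + t (i + k - 1)`-style gaps starting at index `i`. -/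
def Gap : ℕ → ℕ → List ℕ → Prop
  | _, _, [] => True
  | s, i, x :: l => s ≤ x ∧ x ≤ n ∧ Gap (x + t i) (i + 1) l

lemma Gap.mono : ∀ {s s' i l}, Gap n t s i l → s' ≤ s → Gap n t s' i l := by
  intro s s' i l h hs
  cases l with
  | nil => trivial
  | cons x l => exact ⟨hs.trans h.1, h.2.1, h.2.2⟩

lemma Gap.le_mem : ∀ {s i l}, Gap n t s i l → ∀ x ∈ l, s ≤ x := by
  intro s i l
  induction l generalizing s i with
  | nil => intro _ x hx; cases hx
  | cons y l ih =>
    rintro ⟨h1, h2, h3⟩ x hx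
    rcases List.mem_cons.mp hx with rfl | hx
    · exact h1
    · exact le_trans (h1.trans (Nat.le_add_right _ _)) (ih h3 x hx)

lemma Gap.mem_le_n : ∀ {s i l}, Gap n t s i l → ∀ x ∈ l, x ≤ n := by
  intro s i l
  induction l generalizing s i with
  | nil => intro _ x hx; cases hx
  | cons y l ih =>
    rintro ⟨_, h2, h3⟩ x hx
    rcases List.mem_cons.mp hx with rfl | hx
    · exact h2
    · exact ih h3 x hx

lemma Gap.sorted : ∀ {s i l}, Gap n t s i l → l.Pairwise (· ≤ ·) := by
  intro s i l
  induction l generalizing s i with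
  | nil => intro _; exact List.Pairwise.nil
  | cons y l ih =>
    rintro ⟨_, _, h3⟩
    exact List.pairwise_cons.mpr
      ⟨fun b hb => le_trans (Nat.le_add_right _ _) (Gap.le_mem n t h3 b hb), ih h3⟩

lemma Gap.take : ∀ {s i l} (k : ℕ), Gap n t s i l → Gap n t s i (l.take k) := by
  intro s i l
  induction l generalizing s i with
  | nil => intro k _; simp [Gap]
  | cons y l ih =>
    intro k h
    cases k with
    | zero => trivial
    | succ k => exact ⟨h.1, h.2.1, ih k h.2.2⟩

/-- characterization of `Gap` via `getD`. -/
lemma gap_iff_getD : ∀ {s i} (l : List ℕ),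
    Gap n t s i l ↔ (∀ x ∈ l, x ≤ n) ∧ (l = [] ∨ s ≤ l.getD 0 0) ∧
      (∀ k, k + 1 < l.length → l.getD k 0 + t (i + k) ≤ l.getD (k + 1) 0) := by
  intro s i l
  induction l generalizing s i with
  | nil => simp [Gap]
  | cons y l ih =>
    constructor
    · rintro ⟨h1, h2, h3⟩
      refine ⟨Gap.mem_le_n n t ⟨h1, h2, h3⟩, Or.inr h1, ?_⟩
      intro k hk
      cases k with
      | zero =>
        have := (ih.mp h3).2.1
        cases l with
        | nil => simp at hk
        | cons z l =>
          rcases this with h | h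
          · simp at h
          · simpa using h
      | succ k =>
        have := (ih.mp h3).2.2 k (by simpa using hk)
        simpa [Nat.add_assoc, Nat.add_comm 1 k] using this
    · rintro ⟨h1, h2, h3⟩
      refine ⟨?_, h1 y (List.mem_cons_self), ?_⟩
      · rcases h2 with h | h
        · simp at h
        · simpa using h
      · rw [ih]
        refine ⟨fun x hx => h1 x (List.mem_cons_of_mem _ hx), ?_, ?_⟩
        · cases l with
          | nil => exact Or.inl rfl
          | cons z l =>
            refine Or.inr ?_
            have := h3 0 (by simp)
            simpa using this
        · intro k hk
          have := h3 (k + 1) (by simpa using hk)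
          simpa [Nat.add_assoc, Nat.add_comm 1 k] using this

/-- telescoping: entry `q` plus the intermediate gaps is at most entry `q + r`. -/
lemma gap_tele {s i} (l : List ℕ) (h : Gap n t s i l) :
    ∀ q r, q + r < l.length →
      l.getD q 0 + ∑ h ∈ Finset.Ico (i + q) (i + q + r), t h ≤ l.getD (q + r) 0 := by
  intro q r
  induction r with
  | zero => intro _; simp
  | succ r ih =>
    intro hlt
    have h1 : l.getD (q + r) 0 + t (i + (q + r)) ≤ l.getD (q + r + 1) 0 :=
      ((gap_iff_getD n t l).mp h).2.2 (q + r) (by omega)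
    have h2 := ih (by omega)
    have hsum : ∑ h ∈ Finset.Ico (i + q) (i + q + (r + 1)), t h
        = (∑ h ∈ Finset.Ico (i + q) (i + q + r), t h) + t (i + q + r) := by
      rw [show i + q + (r + 1) = (i + q + r) + 1 by ring]
      exact Finset.sum_Ico_succ_top (by omega) _
    rw [hsum, show q + (r + 1) = q + r + 1 by ring]
    rw [show i + (q + r) = i + q + r by ring] at h1
    omega


variable (n : ℕ) (t : ℕ → ℕ)


/-- Finset of lists of length `r` satisfying `Gap n t s i`. -/
def G : ℕ → ℕ → ℕ → Finset (List ℕ)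
  | 0, _, _ => {[]}
  | r + 1, s, i => (Finset.Icc s n).biUnion fun j => (G r (j + t i) (i + 1)).image (j :: ·)

lemma mem_G : ∀ {r s i} (l : List ℕ), l ∈ G n t r s i ↔ Gap n t s i l ∧ l.length = r := by
  intro r
  induction r with
  | zero =>
    intro s i l
    simp only [G, Finset.mem_singleton, List.length_eq_zero_iff]
    constructor
    · rintro rfl; exact ⟨trivial, rfl⟩
    · rintro ⟨_, rfl⟩; rfl
  | succ r ih =>
    intro s i l
    simp only [G, Finset.mem_biUnion, Finset.mem_image, Finset.mem_Icc]
    constructor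
    · rintro ⟨j, ⟨hs, hn⟩, l', hl', rfl⟩
      exact ⟨⟨hs, hn, ((ih l').mp hl').1⟩, by simp [((ih l').mp hl').2]⟩
    · rintro ⟨hg, hl⟩
      cases l with
      | nil => simp at hl
      | cons y l' =>
        exact ⟨y, ⟨hg.1, hg.2.1⟩, l', (ih l').mpr ⟨hg.2.2, by simpa using hl⟩, rfl⟩

/-- hockey-stick summation, truncated-subtraction form. -/
lemma hockey (A r : ℕ) (hr : 1 ≤ r) :
    ∀ N s, s ≤ N + 1 → ∑ j ∈ Finset.Icc s N, (A - j).choose r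
      = ((A + 1) - s).choose (r + 1) - ((A + 1) - (N + 1)).choose (r + 1) := by
  intro N
  induction N with
  | zero =>
    intro s hs
    interval_cases s
    · simp [Nat.choose_succ_succ A r, Nat.add_comm, Nat.add_sub_cancel]
    · simp
  | succ N ihN =>
    intro s hs
    rcases Nat.lt_or_ge s (N + 2) with h | h
    · have hs' : s ≤ N + 1 := by omega
      rw [Finset.sum_Icc_succ_top (by omega), ihN s hs']
      have key : ((A + 1) - (N + 1)).choose (r + 1)
          = ((A + 1) - (N + 1 + 1)).choose (r + 1) + (A - (N + 1)).choose r := by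
        rcases Nat.lt_or_ge A (N + 1) with hA | hA
        · have e1 : (A + 1) - (N + 1) = 0 := by omega
          have e2 : (A + 1) - (N + 2) = 0 := by omega
          have e3 : A - (N + 1) = 0 := by omega
          rw [e1, e2, e3]
          simp [Nat.choose_eq_zero_of_lt (by omega : 0 < r),
            Nat.choose_eq_zero_of_lt (by omega : (0:ℕ) < r + 1)]
        · have e1 : (A + 1) - (N + 1) = (A - (N + 1)) + 1 := by omega
          have e2 : (A + 1) - (N + 2) = A - (N + 1) := by omega
          rw [e1, e2, Nat.choose_succ_succ', Nat.add_comm]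
      have mono : ((A+1) - (N+1)).choose (r+1) ≤ ((A+1) - s).choose (r+1) :=
        Nat.choose_le_choose _ (by omega)
      have mono2 : ((A+1) - (N+1+1)).choose (r+1) ≤ ((A+1) - (N+1)).choose (r+1) :=
        Nat.choose_le_choose _ (by omega)
      omega
    · have : s = N + 2 := by omega
      subst this
      simp
lemma card_G : ∀ (r : ℕ) {s i : ℕ}, 1 ≤ s →
    (G n t r s i).card = ((n + r) - (s + ∑ h ∈ Finset.Ico i (i + r - 1), t h)).choose r := by
  intro r
  induction r with
  | zero => intro s i _; simp [G]
  | succ r ih =>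
    intro s i hs
    have hdisj : ∀ x ∈ Finset.Icc s n, ∀ y ∈ Finset.Icc s n, x ≠ y →
        Disjoint ((G n t r (x + t i) (i + 1)).image (x :: ·))
          ((G n t r (y + t i) (i + 1)).image (y :: ·)) := by
      intro x _ y _ hxy
      rw [Finset.disjoint_left]
      rintro l hl1 hl2
      obtain ⟨l1, _, rfl⟩ := Finset.mem_image.mp hl1
      obtain ⟨l2, _, h⟩ := Finset.mem_image.mp hl2
      exact hxy (by simpa using congrArg (fun l => l.headI) h.symm)
    have hcard : (G n t (r + 1) s i).card
        = ∑ j ∈ Finset.Icc s n, (G n t r (j + t i) (i + 1)).card := by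
      rw [show G n t (r + 1) s i = (Finset.Icc s n).biUnion
          (fun j => (G n t r (j + t i) (i + 1)).image (j :: ·)) from rfl,
        Finset.card_biUnion hdisj]
      refine Finset.sum_congr rfl fun j _ => Finset.card_image_of_injective _ ?_
      intro a b hab; simpa using hab
    have hIcoempty : ∀ j : ℕ, Finset.Ico j (j + 0 - 1) = ∅ := by
      intro j; apply Finset.Ico_eq_empty; omega
    rcases Nat.eq_or_lt_of_le (Nat.zero_le r) with hr0 | hr1
    · -- r = 0
      rw [hcard]
      subst hr0
      have hone : ∀ j ∈ Finset.Icc s n, (G n t 0 (j + t i) (i + 1)).card = 1 := by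
        intro j hj
        have := (Finset.mem_Icc.mp hj).1
        rw [ih (by omega : 1 ≤ j + t i), hIcoempty]
        simp
      rw [Finset.sum_congr rfl hone]
      rw [show Finset.Ico i (i + (0 + 1) - 1) = ∅ by apply Finset.Ico_eq_empty; omega]
      simp only [Finset.sum_const, smul_eq_mul, mul_one, Nat.card_Icc,
        Finset.sum_empty, Nat.add_zero]
      rw [Nat.choose_one_right]
    · -- 1 ≤ r
      have hsplit : ∑ h ∈ Finset.Ico i (i + (r + 1) - 1), t h
          = t i + ∑ h ∈ Finset.Ico (i + 1) (i + r), t h := by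
        rw [show i + (r + 1) - 1 = i + r by omega]
        exact Finset.sum_eq_sum_Ico_succ_bot (by omega) _
      have hterm : ∀ j ∈ Finset.Icc s n,
          (G n t r (j + t i) (i + 1)).card
            = (((n + r) - (∑ h ∈ Finset.Ico i (i + (r + 1) - 1), t h)) - j).choose r := by
        intro j hj
        have := (Finset.mem_Icc.mp hj).1
        rw [ih (by omega : 1 ≤ j + t i)]
        congr 1
        rw [show i + 1 + r - 1 = i + r by omega]
        omega
      rw [hcard, Finset.sum_congr rfl hterm]
      rcases le_or_gt s (n + 1) with h | h
      · rw [hockey _ r (by omega) n s h]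
        have hz : ((((n + r) - (∑ h ∈ Finset.Ico i (i + (r + 1) - 1), t h)) + 1)
            - (n + 1)).choose (r + 1) = 0 :=
          Nat.choose_eq_zero_of_lt (by omega)
        rw [hz, Nat.sub_zero]
        congr 1
        omega
      · rw [Finset.Icc_eq_empty (by omega), Finset.sum_empty]
        exact (Nat.choose_eq_zero_of_lt (by omega)).symm


lemma sorted_coe_inj {l1 l2 : List ℕ} (h1 : l1.Pairwise (· ≤ ·)) (h2 : l2.Pairwise (· ≤ ·))
    (h : (l1 : Multiset ℕ) = (l2 : Multiset ℕ)) : l1 = l2 :=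
  List.Perm.eq_of_pairwise' h1 h2 (Multiset.coe_eq_coe.mp h)

/-- the key counting lemma. -/
lemma count : ∀ (g : List ℕ) {s i m : ℕ}, 1 ≤ s → Gap n t s i g → g.length ≤ m →
    ({v : Multiset ℕ | ∃ l : List ℕ, (l : Multiset ℕ) = v ∧ Gap n t s i l ∧
        l.length = m ∧ LLex g l}).Finite ∧
    ({v : Multiset ℕ | ∃ l : List ℕ, (l : Multiset ℕ) = v ∧ Gap n t s i l ∧
        l.length = m ∧ LLex g l}).ncard
      = ∑ q ∈ Finset.range g.length,
          ((n + (m - q)) - (g.getD q 0 + 1 + ∑ h ∈ Finset.Ico (i + q) (i + m - 1), t h)).choose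
            (m - q) := by
  intro g
  induction g with
  | nil =>
    intro s i m _ _ _
    have : {v : Multiset ℕ | ∃ l : List ℕ, (l : Multiset ℕ) = v ∧ Gap n t s i l ∧
        l.length = m ∧ LLex [] l} = ∅ := by
      ext v; simp only [Set.mem_setOf_eq, Set.mem_empty_iff_false, iff_false]
      rintro ⟨l, _, _, _, hll⟩
      cases l <;> exact hll
    rw [this]
    simp
  | cons x g' ihg =>
    intro s i m hs hg hm
    simp only [List.length_cons] at hm
    have hm1 : 1 ≤ m := by omega
    obtain ⟨hsx, hxn, hg'⟩ := hg
    -- the IH set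
    set S' : Set (Multiset ℕ) := {v : Multiset ℕ | ∃ l : List ℕ, (l : Multiset ℕ) = v ∧
        Gap n t (x + t i) (i + 1) l ∧ l.length = m - 1 ∧ LLex g' l} with hS'
    obtain ⟨hS'fin, hS'card⟩ := ihg (show 1 ≤ x + t i by omega) hg' (show g'.length ≤ m - 1 by omega)
    -- the A part as a finset
    set FA : Finset (Multiset ℕ) := (G n t m (x + 1) i).image (fun l : List ℕ => (l : Multiset ℕ))
      with hFA
    have hsplit : {v : Multiset ℕ | ∃ l : List ℕ, (l : Multiset ℕ) = v ∧ Gap n t s i l ∧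
        l.length = m ∧ LLex (x :: g') l} = ↑FA ∪ (fun v => x ::ₘ v) '' S' := by
      ext v
      simp only [Set.mem_setOf_eq, Set.mem_union, Finset.coe_image, Set.mem_image,
        Finset.mem_coe, hFA, Finset.mem_image]
      constructor
      · rintro ⟨l, rfl, hGap, hlen, hll⟩
        cases l with
        | nil => exact absurd hll (by intro h; exact h)
        | cons y l' =>
          rcases hll with hlt | ⟨rfl, hll'⟩
          · exact Or.inl ⟨y :: l', (mem_G n t _).mpr ⟨⟨hlt, hGap.2.1, hGap.2.2⟩, hlen⟩, rfl⟩
          · refine Or.inr ⟨(l' : Multiset ℕ), ⟨l', rfl, hGap.2.2, ?_, hll'⟩, ?_⟩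
            · simp only [List.length_cons] at hlen; omega
            · simp [Multiset.cons_coe]
      · rintro (⟨l, hlG, rfl⟩ | ⟨v', ⟨l', rfl, hg'', hlen', hll'⟩, rfl⟩)
        · obtain ⟨hGap, hlen⟩ := (mem_G n t l).mp hlG
          refine ⟨l, rfl, Gap.mono n t hGap (by omega), hlen, ?_⟩
          cases l with
          | nil => simp at hlen; omega
          | cons y l' => exact Or.inl (by have := hGap.1; omega)
        · refine ⟨x :: l', by simp [Multiset.cons_coe], ⟨hsx, hxn, hg''⟩, ?_, ?_⟩
          · simp only [List.length_cons]; omega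
          · exact Or.inr ⟨rfl, hll'⟩
    have hAfin : (↑FA : Set (Multiset ℕ)).Finite := FA.finite_toSet
    have hBfin : ((fun v => x ::ₘ v) '' S').Finite := hS'fin.image _
    have hconsinj : Function.Injective (fun v : Multiset ℕ => x ::ₘ v) := by
      intro a b hab
      exact (Multiset.cons_inj_right x).mp hab
    have hdisj : Disjoint (↑FA : Set (Multiset ℕ)) ((fun v => x ::ₘ v) '' S') := by
      rw [Set.disjoint_left]
      rintro v hv1 ⟨v', _, rfl⟩
      simp only [hFA, Finset.coe_image, Set.mem_image, Finset.mem_coe] at hv1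
      obtain ⟨l, hlG, hl⟩ := hv1
      obtain ⟨hGap, _⟩ := (mem_G n t l).mp hlG
      have hx : x ∈ (l : Multiset ℕ) := by rw [hl]; exact Multiset.mem_cons_self _ _
      have := Gap.le_mem n t hGap x (by simpa using hx)
      omega
    refine ⟨by rw [hsplit]; exact hAfin.union hBfin, ?_⟩
    rw [hsplit, Set.ncard_union_eq hdisj hAfin hBfin]
    have hcA : (↑FA : Set (Multiset ℕ)).ncard
        = ((n + m) - (x + 1 + ∑ h ∈ Finset.Ico i (i + m - 1), t h)).choose m := by
      rw [Set.ncard_coe_finset, hFA, Finset.card_image_of_injOn, card_G n t m (by omega)]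
      intro l1 h1 l2 h2 h12
      exact sorted_coe_inj (Gap.sorted n t ((mem_G n t l1).mp h1).1)
        (Gap.sorted n t ((mem_G n t l2).mp h2).1) h12
    have hcB : ((fun v => x ::ₘ v) '' S').ncard = S'.ncard :=
      Set.ncard_image_of_injective _ hconsinj
    rw [hcA, hcB, hS'card]
    rw [List.length_cons, Finset.sum_range_succ', add_comm]
    congr 1
    · refine Finset.sum_congr rfl fun q' _ => ?_
      have e1 : m - 1 - q' = m - (q' + 1) := by omega
      have e2 : i + 1 + q' = i + (q' + 1) := by omega
      have e3 : i + 1 + (m - 1) - 1 = i + m - 1 := by omega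
      rw [e1, e2, e3]
      simp

lemma pref : ∀ (y : List ℕ) (a : ℕ), (a :: y).Pairwise (· ≤ ·) →
    ((a :: y).take y.length = y ∨ LLex ((a :: y).take y.length) y) := by
  intro y
  induction y with
  | nil => intro a _; exact Or.inl rfl
  | cons b y' ih =>
    intro a hs
    have hab : a ≤ b := (List.pairwise_cons.mp hs).1 b (List.mem_cons_self)
    simp only [List.length_cons, List.take_succ_cons]
    rcases Nat.lt_or_ge a b with h | h
    · exact Or.inr (Or.inl h)
    · have hab' : a = b := by omega
      rcases ih b (List.pairwise_cons.mp hs).2 with h' | h'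
      · rw [show (b :: y').take y'.length = y' from h']
        exact Or.inl (by rw [hab'])
      · exact Or.inr (Or.inr ⟨hab', h'⟩)

lemma del : ∀ (z : List ℕ), ∀ {w : List ℕ} {x : ℕ}, z.Pairwise (· ≤ ·) → w.Pairwise (· ≤ ·) →
    x ::ₘ (w : Multiset ℕ) = (z : Multiset ℕ) →
    (z.take w.length = w ∨ LLex (z.take w.length) w) := by
  intro z
  induction z with
  | nil =>
    intro w x _ _ heq
    exact absurd heq (by simp)
  | cons a z' ih =>
    intro w x hsz hsw heq
    cases w with
    | nil => exact Or.inl rfl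
    | cons b w' =>
      have hb : b ∈ (a :: z' : List ℕ) := by
        rw [← Multiset.mem_coe, ← heq]
        simp
      have hab : a ≤ b := by
        rcases List.mem_cons.mp hb with rfl | hb'
        · exact le_rfl
        · exact (List.pairwise_cons.mp hsz).1 b hb'
      rcases Nat.lt_or_ge a b with hlt | hge
      · -- a < b, so x = a and w = z'
        have hax : x = a := by
          have ha : a ∈ x ::ₘ ((b :: w' : List ℕ) : Multiset ℕ) := by
            rw [heq]; simp
          rcases Multiset.mem_cons.mp ha with h | h
          · exact h.symm
          · exfalso
            have : b ≤ a := by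
              rcases List.mem_cons.mp (Multiset.mem_coe.mp h) with rfl | h'
              · exact le_rfl
              · exact (List.pairwise_cons.mp hsw).1 a h'
            omega
        have hwz : (b :: w' : List ℕ) = z' := by
          subst hax
          simp only [← Multiset.cons_coe] at heq
          have h2 := (Multiset.cons_inj_right x).mp heq
          refine sorted_coe_inj hsw (List.pairwise_cons.mp hsz).2 ?_
          rw [← Multiset.cons_coe]
          exact h2
        rw [← hwz]
        exact pref (b :: w') a (by rw [hwz]; exact hsz)
      · -- a = b
        have hab' : a = b := by omega
        subst hab'
        have heq' : x ::ₘ ((w' : List ℕ) : Multiset ℕ) = ((z' : List ℕ) : Multiset ℕ) := by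
          apply (Multiset.cons_inj_right a).mp
          simp only [← Multiset.cons_coe] at heq
          rw [Multiset.cons_swap]
          exact heq
        rcases ih (List.pairwise_cons.mp hsz).2 (List.pairwise_cons.mp hsw).2 heq' with h | h
        · simp only [List.length_cons, List.take_succ_cons]
          rw [h]
          exact Or.inl rfl
        · simp only [List.length_cons, List.take_succ_cons]
          exact Or.inr (Or.inr ⟨rfl, h⟩)

lemma sort_coe (l : List ℕ) (hl : l.Pairwise (· ≤ ·)) :
    ((l : Multiset ℕ)).sort (· ≤ ·) = l :=
  sorted_coe_inj (Multiset.pairwise_sort _ _) hl (by rw [Multiset.sort_eq])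

lemma mem_Mset_iff {n d m : ℕ} {t : ℕ → ℕ} (hmd : m ≤ d) (v : Multiset ℕ) :
    v ∈ Mset n d m t ↔ Gap n t 1 1 (v.sort (· ≤ ·)) ∧ (v.sort (· ≤ ·)).length = m := by
  have hlen : (v.sort (· ≤ ·)).length = v.card := Multiset.length_sort _
  rw [show (v ∈ Mset n d m t) ↔ TSpread n d t v ∧ v.card = m from Iff.rfl]
  unfold TSpread
  rw [gap_iff_getD]
  constructor
  · rintro ⟨⟨hcard, hbd, hgap⟩, hm⟩
    refine ⟨⟨?_, ?_, ?_⟩, by omega⟩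
    · intro x hx
      exact (hbd x ((Multiset.mem_sort _).mp hx)).2
    · cases hsort : v.sort (· ≤ ·) with
      | nil => exact Or.inl rfl
      | cons y l =>
        right
        have hy : y ∈ v.sort (· ≤ ·) := by rw [hsort]; exact List.mem_cons_self
        have := (hbd y ((Multiset.mem_sort _).mp hy)).1
        simpa using this
    · intro k hk
      have := hgap k (by omega)
      rwa [Nat.add_comm 1 k]
  · rintro ⟨⟨hbd, hhd, hgap⟩, hm⟩
    have hbd' : ∀ i ∈ v, 1 ≤ i ∧ i ≤ n := by
      intro x hx
      have hx' : x ∈ v.sort (· ≤ ·) := (Multiset.mem_sort _).mpr hx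
      refine ⟨?_, hbd x hx'⟩
      rcases hhd with h | h
      · rw [h] at hx'; cases hx'
      · cases hsort : v.sort (· ≤ ·) with
        | nil => rw [hsort] at hx'; cases hx'
        | cons y l =>
          rw [hsort] at hx' h
          have hsorted : (y :: l).Pairwise (· ≤ ·) := by
            rw [← hsort]; exact Multiset.pairwise_sort _ _
          rcases List.mem_cons.mp hx' with rfl | hx''
          · simpa using h
          · have h2 := (List.pairwise_cons.mp hsorted).1 x hx''
            simp only [List.getD_cons_zero] at h
            omega
    refine ⟨⟨by omega, hbd', ?_⟩, by omega⟩
    intro k hk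
    have := hgap k (by omega)
    rw [Nat.add_comm 1 k] at this
    exact this

section Main

variable {n d ℓ : ℕ} {t : ℕ → ℕ} {u : Multiset ℕ}

lemma setS1 (hd : ℓ ≤ d) (huM : u ∈ Mset n d ℓ t) :
    Mset n d ℓ t \ {v ∈ Mset n d ℓ t | lexGE v u}
      = {v : Multiset ℕ | ∃ l : List ℕ, (l : Multiset ℕ) = v ∧ Gap n t 1 1 l ∧
          l.length = ℓ ∧ LLex (u.sort (· ≤ ·)) l} := by
  obtain ⟨huG, hulen⟩ := (mem_Mset_iff hd u).mp huM
  ext v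
  simp only [Set.mem_diff, Set.mem_setOf_eq, Set.mem_sep_iff]
  constructor
  · rintro ⟨hvM, hvnot⟩
    obtain ⟨hvG, hvlen⟩ := (mem_Mset_iff hd v).mp hvM
    have hnge : ¬ lexGE v u := fun h => hvnot ⟨hvM, h⟩
    refine ⟨v.sort (· ≤ ·), Multiset.sort_eq _ _, hvG, hvlen, ?_⟩
    rcases llex_trichotomy (u.sort (· ≤ ·)) (v.sort (· ≤ ·)) (by omega) with h | h | h
    · exfalso
      apply hnge
      left
      have := congrArg (fun l : List ℕ => (l : Multiset ℕ)) h
      simpa [Multiset.sort_eq] using this.symm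
    · exact h
    · exact absurd (Or.inr (llex_toLex h)) hnge
  · rintro ⟨l, rfl, hGap, hlen, hll⟩
    have hsort : ((l : Multiset ℕ)).sort (· ≤ ·) = l := sort_coe l (Gap.sorted n t hGap)
    have hvM : (l : Multiset ℕ) ∈ Mset n d ℓ t :=
      (mem_Mset_iff hd _).mpr ⟨by rwa [hsort], by rwa [hsort]⟩
    refine ⟨hvM, ?_⟩
    rintro ⟨-, (h | h)⟩
    · rw [← h, hsort] at hll
      exact llex_irrefl _ hll
    · rw [hsort] at h
      exact llex_asymm hll (llex_ofLex (by omega) h)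

lemma setS2 (hd : ℓ < d) (huM : u ∈ Mset n d ℓ t) :
    Mset n d (ℓ + 1) t \ Shad n d t {v ∈ Mset n d ℓ t | lexGE v u}
      = {z : Multiset ℕ | ∃ l : List ℕ, (l : Multiset ℕ) = z ∧ Gap n t 1 1 l ∧
          l.length = ℓ + 1 ∧ LLex (u.sort (· ≤ ·)) l} := by
  obtain ⟨huG, hulen⟩ := (mem_Mset_iff (le_of_lt hd) u).mp huM
  ext z
  simp only [Set.mem_diff, Set.mem_setOf_eq]
  constructor
  · rintro ⟨hzM, hns⟩
    obtain ⟨hzG, hzlen⟩ := (mem_Mset_iff hd z).mp hzM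
    set zs := z.sort (· ≤ ·) with hzs
    have hdrop : ∃ c, zs.drop ℓ = [c] := by
      have h1 : (zs.drop ℓ).length = 1 := by rw [List.length_drop]; omega
      cases hc : zs.drop ℓ with
      | nil => rw [hc] at h1; simp at h1
      | cons c l' =>
        rw [hc] at h1
        simp only [List.length_cons] at h1
        have : l' = [] := List.length_eq_zero_iff.mp (by omega)
        exact ⟨c, by rw [this]⟩
    obtain ⟨c, hc⟩ := hdrop
    have hzdecomp : z = c ::ₘ ((zs.take ℓ : List ℕ) : Multiset ℕ) := by
      have h1 : z = ((zs.take ℓ ++ zs.drop ℓ : List ℕ) : Multiset ℕ) := by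
        rw [List.take_append_drop]
        exact (Multiset.sort_eq _ _).symm
      rw [h1, hc]
      rw [← Multiset.coe_add, add_comm, Multiset.coe_singleton,
        Multiset.singleton_add]
    have hwG : Gap n t 1 1 (zs.take ℓ) := Gap.take n t ℓ hzG
    have hwsorted := Gap.sorted n t hwG
    have hwlen : (zs.take ℓ).length = ℓ := by rw [List.length_take]; omega
    have hnlex : ¬ lexGE ((zs.take ℓ : List ℕ) : Multiset ℕ) u := by
      intro h
      apply hns
      have hcz : c ∈ z := by rw [hzdecomp]; exact Multiset.mem_cons_self _ _
      have hcb := hzM.1.2.1 c hcz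
      exact ⟨_, ⟨(mem_Mset_iff (le_of_lt hd) _).mpr
          ⟨by rwa [sort_coe _ hwsorted], by rwa [sort_coe _ hwsorted]⟩, h⟩,
        c, hcb.1, hcb.2, hzdecomp, hzM.1⟩
    have hll : LLex (u.sort (· ≤ ·)) (zs.take ℓ) := by
      rcases llex_trichotomy (u.sort (· ≤ ·)) (zs.take ℓ) (by omega) with h | h | h
      · exfalso
        apply hnlex
        left
        have := congrArg (fun l : List ℕ => (l : Multiset ℕ)) h
        simpa [Multiset.sort_eq] using this.symm
      · exact h
      · exact absurd (Or.inr (by rw [sort_coe _ hwsorted]; exact llex_toLex h)) hnlex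
    refine ⟨zs, Multiset.sort_eq _ _, hzG, hzlen, ?_⟩
    have htk := llex_take (u.sort (· ≤ ·)) zs
    rw [hulen] at htk
    exact htk.mp hll
  · rintro ⟨l, rfl, hGap, hlen, hll⟩
    have hsort : ((l : Multiset ℕ)).sort (· ≤ ·) = l := sort_coe l (Gap.sorted n t hGap)
    refine ⟨(mem_Mset_iff (by omega) _).mpr ⟨by rwa [hsort], by rwa [hsort]⟩, ?_⟩
    rintro ⟨w, ⟨hwM, hwge⟩, i0, hi01, hi0n, hzi, hTz⟩
    obtain ⟨hwG2, hwlen2⟩ := (mem_Mset_iff (le_of_lt hd) w).mp hwM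
    have hdel := del l (Gap.sorted n t hGap) (Multiset.pairwise_sort w (· ≤ ·))
      (x := i0) (by rw [Multiset.sort_eq]; exact hzi.symm)
    rw [hwlen2] at hdel
    have htk := llex_take (u.sort (· ≤ ·)) l
    rw [hulen] at htk
    have hll2 : LLex (u.sort (· ≤ ·)) (l.take ℓ) := htk.mpr hll
    have hllws : LLex (u.sort (· ≤ ·)) (w.sort (· ≤ ·)) := by
      rcases hdel with h | h
      · rwa [← h]
      · exact llex_trans hll2 h
    rcases hwge with h | h
    · rw [h] at hllws
      exact llex_irrefl _ hllws
    · exact llex_asymm hllws (llex_ofLex (by omega) h)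

end Main

lemma mono_ge {ℓ p : ℕ} {c : ℕ → ℕ}
    (hmono : ∀ j k, p ≤ j → j < k → k ≤ ℓ → c j < c k) (hcp : p ≤ c p) :
    ∀ j, p ≤ j → j ≤ ℓ → j ≤ c j := by
  intro j
  induction j with
  | zero => intro _ _; omega
  | succ j ih =>
    intro hpj hjl
    rcases Nat.eq_or_lt_of_le hpj with h | h
    · exact h ▸ hcp
    · have h1 := ih (by omega) (by omega)
      have h2 := hmono j (j + 1) (by omega) (by omega) hjl
      omega

lemma mac_bound : ∀ (ℓ : ℕ) {p : ℕ} {c : ℕ → ℕ}, 1 ≤ p → p ≤ ℓ →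
    (∀ j k, p ≤ j → j < k → k ≤ ℓ → c j < c k) → p ≤ c p →
    ∑ j ∈ Finset.Icc p ℓ, (c j).choose j < (c ℓ + 1).choose ℓ := by
  intro ℓ
  induction ℓ with
  | zero => intro p c hp1 hpl _ _; omega
  | succ m ihm =>
    intro p c hp1 hpl hmono hcp
    have hcl : m + 1 ≤ c (m + 1) :=
      mono_ge hmono hcp (m + 1) hpl (le_refl _)
    have hpascal : (c (m + 1) + 1).choose (m + 1)
        = (c (m + 1)).choose m + (c (m + 1)).choose (m + 1) :=
      Nat.choose_succ_succ _ _
    rcases Nat.eq_or_lt_of_le hpl with h | h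
    · rw [h, Finset.Icc_self, Finset.sum_singleton]
      have : 0 < (c (m + 1)).choose m := Nat.choose_pos (by omega)
      omega
    · have hsplit : ∑ j ∈ Finset.Icc p (m + 1), (c j).choose j
          = (∑ j ∈ Finset.Icc p m, (c j).choose j) + (c (m + 1)).choose (m + 1) :=
        Finset.sum_Icc_succ_top (by omega) _
      have hih := ihm hp1 (by omega)
        (fun j k hj hjk hk => hmono j k hj hjk (by omega)) hcp
      have hmle : (c m + 1).choose m ≤ (c (m + 1)).choose m :=
        Nat.choose_le_choose _ (hmono m (m + 1) (by omega) (by omega) (le_refl _))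
      omega

lemma mac_unique : ∀ (ℓ : ℕ), ∀ {p p' : ℕ} {c c' : ℕ → ℕ}, 1 ≤ p → p ≤ ℓ → 1 ≤ p' → p' ≤ ℓ →
    (∀ j k, p ≤ j → j < k → k ≤ ℓ → c j < c k) → p ≤ c p →
    (∀ j k, p' ≤ j → j < k → k ≤ ℓ → c' j < c' k) → p' ≤ c' p' →
    (∑ j ∈ Finset.Icc p ℓ, (c j).choose j) = (∑ j ∈ Finset.Icc p' ℓ, (c' j).choose j) →
    p = p' ∧ ∀ j, p ≤ j → j ≤ ℓ → c j = c' j := by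
  intro ℓ
  induction ℓ with
  | zero => intro p p' c c' hp1 hpl _ _ _ _ _ _ _; omega
  | succ m ihm =>
    intro p p' c c' hp1 hpl hp'1 hp'l hmono hcp hmono' hcp' hsum
    -- top coefficients agree
    have htop : c (m + 1) = c' (m + 1) := by
      have h1 : (c (m + 1)).choose (m + 1) ≤ ∑ j ∈ Finset.Icc p (m + 1), (c j).choose j :=
        Finset.single_le_sum (f := fun j => (c j).choose j) (fun j _ => Nat.zero_le _) (Finset.mem_Icc.mpr ⟨hpl, le_refl _⟩)
      have h1' : (c' (m + 1)).choose (m + 1) ≤ ∑ j ∈ Finset.Icc p' (m + 1), (c' j).choose j :=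
        Finset.single_le_sum (f := fun j => (c' j).choose j) (fun j _ => Nat.zero_le _) (Finset.mem_Icc.mpr ⟨hp'l, le_refl _⟩)
      have h2 := mac_bound (m + 1) hp1 hpl hmono hcp
      have h2' := mac_bound (m + 1) hp'1 hp'l hmono' hcp'
      by_contra hne
      rcases Nat.lt_or_ge (c (m + 1)) (c' (m + 1)) with h | h
      · have : (c' (m + 1)).choose (m + 1) ≥ (c (m + 1) + 1).choose (m + 1) :=
          Nat.choose_le_choose _ (by omega)
        omega
      · have : (c (m + 1)).choose (m + 1) ≥ (c' (m + 1) + 1).choose (m + 1) :=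
          Nat.choose_le_choose _ (by omega)
        omega
    have hpos : 0 < (c' p').choose p' := Nat.choose_pos hcp'
    have hpos2 : 0 < (c p).choose p := Nat.choose_pos hcp
    rcases Nat.eq_or_lt_of_le hpl with hpe | hplt
    · -- p = m + 1
      rcases Nat.eq_or_lt_of_le hp'l with hp'e | hp'lt
      · refine ⟨by omega, fun j hj hjl => ?_⟩
        have : j = m + 1 := by omega
        rw [this]; exact htop
      · exfalso
        have hs1 : ∑ j ∈ Finset.Icc p (m + 1), (c j).choose j = (c (m + 1)).choose (m + 1) := by
          rw [hpe, Finset.Icc_self, Finset.sum_singleton]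
        have hs2 : ∑ j ∈ Finset.Icc p' (m + 1), (c' j).choose j
            = (∑ j ∈ Finset.Icc p' m, (c' j).choose j) + (c' (m + 1)).choose (m + 1) :=
          Finset.sum_Icc_succ_top (by omega) _
        have hmem : (c' p').choose p' ≤ ∑ j ∈ Finset.Icc p' m, (c' j).choose j :=
          Finset.single_le_sum (f := fun j => (c' j).choose j) (fun j _ => Nat.zero_le _)
            (Finset.mem_Icc.mpr ⟨le_refl _, by omega⟩)
        have : (c (m+1)).choose (m+1) = (c' (m+1)).choose (m+1) := by rw [htop]
        omega
    · rcases Nat.eq_or_lt_of_le hp'l with hp'e | hp'lt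
      · exfalso
        have hs1 : ∑ j ∈ Finset.Icc p' (m + 1), (c' j).choose j
            = (c' (m + 1)).choose (m + 1) := by
          rw [hp'e, Finset.Icc_self, Finset.sum_singleton]
        have hs2 : ∑ j ∈ Finset.Icc p (m + 1), (c j).choose j
            = (∑ j ∈ Finset.Icc p m, (c j).choose j) + (c (m + 1)).choose (m + 1) :=
          Finset.sum_Icc_succ_top (by omega) _
        have hmem : (c p).choose p ≤ ∑ j ∈ Finset.Icc p m, (c j).choose j :=
          Finset.single_le_sum (f := fun j => (c j).choose j) (fun j _ => Nat.zero_le _)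
            (Finset.mem_Icc.mpr ⟨le_refl _, by omega⟩)
        have : (c (m+1)).choose (m+1) = (c' (m+1)).choose (m+1) := by rw [htop]
        omega
      · -- both < m + 1
        have hs1 : ∑ j ∈ Finset.Icc p (m + 1), (c j).choose j
            = (∑ j ∈ Finset.Icc p m, (c j).choose j) + (c (m + 1)).choose (m + 1) :=
          Finset.sum_Icc_succ_top (by omega) _
        have hs2 : ∑ j ∈ Finset.Icc p' (m + 1), (c' j).choose j
            = (∑ j ∈ Finset.Icc p' m, (c' j).choose j) + (c' (m + 1)).choose (m + 1) :=
          Finset.sum_Icc_succ_top (by omega) _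
        have htope : (c (m+1)).choose (m+1) = (c' (m+1)).choose (m+1) := by rw [htop]
        have hsum' : (∑ j ∈ Finset.Icc p m, (c j).choose j)
            = (∑ j ∈ Finset.Icc p' m, (c' j).choose j) := by omega
        obtain ⟨hpp', hcc'⟩ := ihm hp1 (by omega) hp'1 (by omega)
          (fun j k hj hjk hk => hmono j k hj hjk (by omega)) hcp
          (fun j k hj hjk hk => hmono' j k hj hjk (by omega)) hcp' hsum'
        refine ⟨hpp', fun j hj hjl => ?_⟩
        rcases Nat.eq_or_lt_of_le hjl with hje | hjlt
        · rw [hje]; exact htop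
        · exact hcc' j hj (by omega)

lemma getD_mem_list {l : List ℕ} {k : ℕ} (h : k < l.length) : l.getD k 0 ∈ l := by
  rw [List.getD_eq_getElem?_getD, List.getElem?_eq_getElem h]
  simp [List.getElem_mem]

/-- `AA q` is the quantity `n + (ℓ - q) - (u_q + 1 + t_{q+1} + ⋯ + t_{ℓ-1})`. -/
def AA (n ℓ : ℕ) (t : ℕ → ℕ) (us : List ℕ) (q : ℕ) : ℕ :=
  (n + (ℓ - q)) - (us.getD q 0 + 1 + ∑ h ∈ Finset.Ico (q + 1) ℓ, t h)

section AAfacts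

variable {n ℓ : ℕ} {t : ℕ → ℕ} {us : List ℕ}
variable (huG : Gap n t 1 1 us) (hulen : us.length = ℓ)

include huG hulen

lemma tele2 : ∀ q, q < ℓ → us.getD q 0 + ∑ h ∈ Finset.Ico (q + 1) ℓ, t h ≤ n := by
  intro q hq
  have hlast : us.getD (ℓ - 1) 0 ≤ n :=
    ((gap_iff_getD n t us).mp huG).1 _ (getD_mem_list (by omega))
  rcases Nat.eq_or_lt_of_le (Nat.succ_le_of_lt hq) with h | h
  · rw [show q + 1 = ℓ from h, Finset.Ico_self, Finset.sum_empty]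
    have : us.getD q 0 ≤ n :=
      ((gap_iff_getD n t us).mp huG).1 _ (getD_mem_list (by omega))
    omega
  · have h1 := gap_tele n t us huG q (ℓ - 1 - q) (by omega)
    rw [show 1 + q = q + 1 by omega] at h1
    rw [show q + 1 + (ℓ - 1 - q) = ℓ by omega] at h1
    rw [show q + (ℓ - 1 - q) = ℓ - 1 by omega] at h1
    omega

lemma AA_exact : ∀ q, q < ℓ →
    AA n ℓ t us q + (us.getD q 0 + 1 + ∑ h ∈ Finset.Ico (q + 1) ℓ, t h) = n + (ℓ - q) := by
  intro q hq
  have := tele2 huG hulen q hq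
  unfold AA
  omega

lemma AA_lb : ∀ q, q < ℓ → ℓ - q - 1 ≤ AA n ℓ t us q := by
  intro q hq
  have h1 := AA_exact huG hulen q hq
  have h2 := tele2 huG hulen q hq
  omega

lemma AA_step : ∀ q, q + 1 < ℓ → AA n ℓ t us (q + 1) < AA n ℓ t us q := by
  intro q hq
  have h1 := AA_exact huG hulen q (by omega)
  have h2 := AA_exact huG hulen (q + 1) hq
  have hgap : us.getD q 0 + t (q + 1) ≤ us.getD (q + 1) 0 := by
    have := ((gap_iff_getD n t us).mp huG).2.2 q (by omega)
    rwa [show 1 + q = q + 1 by omega] at this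
  have hsplit : ∑ h ∈ Finset.Ico (q + 1) ℓ, t h
      = t (q + 1) + ∑ h ∈ Finset.Ico (q + 1 + 1) ℓ, t h :=
    Finset.sum_eq_sum_Ico_succ_bot hq _
  omega

lemma AA_dec : ∀ q' q, q < q' → q' < ℓ → AA n ℓ t us q' < AA n ℓ t us q := by
  intro q'
  induction q' with
  | zero => intro q h _; omega
  | succ q'' ih =>
    intro q h hl
    rcases Nat.eq_or_lt_of_le (Nat.succ_le_of_lt h) with h2 | h2
    · rw [← h2]
      exact AA_step huG hulen q (by omega)
    · exact lt_trans (AA_step huG hulen q'' hl) (ih q (by omega) (by omega))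

end AAfacts

end Stmt12

open Stmt12 in
/-- with `a = |M_{n,ℓ,t} \ L_t^i(u)|` and `a = Σ_{j=p}^{ℓ} C(c_j, j)`
the Macaulay expansion of `a` w.r.t. `ℓ`, one has
`|M_{n,ℓ+1,t} \ Shad_t(L_t^i(u))| = a^{(n,ℓ,t)} = Σ_{j=p+1}^{ℓ+1} C(c_{j-1} + 1 - t_ℓ, j)`. -/
theorem stmt12 (n d ℓ : ℕ) (t : ℕ → ℕ) (hd : 2 ≤ d) (hℓ1 : 1 ≤ ℓ) (hℓ : ℓ < d)
    (hn : ∑ j ∈ Finset.Icc 1 (d - 1), t j < n)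
    (u : Multiset ℕ) (huM : u ∈ Mset n d ℓ t)
    (a : ℕ) (ha : a = (Mset n d ℓ t \ {v ∈ Mset n d ℓ t | lexGE v u}).ncard)
    (p : ℕ) (c : ℕ → ℕ) (hp1 : 1 ≤ p) (hpℓ : p ≤ ℓ)
    (hmono : ∀ j k, p ≤ j → j < k → k ≤ ℓ → c j < c k) (hcp : p ≤ c p)
    (hexp : a = ∑ j ∈ Finset.Icc p ℓ, (c j).choose j) :
    (Mset n d (ℓ + 1) t \ Shad n d t {v ∈ Mset n d ℓ t | lexGE v u}).ncard
      = ∑ j ∈ Finset.Icc (p + 1) (ℓ + 1), (c (j - 1) + 1 - t ℓ).choose j := by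
  classical
  have hld : ℓ ≤ d := le_of_lt hℓ
  obtain ⟨huG, hulen⟩ := (mem_Mset_iff hld u).mp huM
  obtain ⟨hfin1, hcnt1⟩ := count n t (u.sort (· ≤ ·)) (m := ℓ) (le_refl 1) huG (by omega)
  obtain ⟨hfin2, hcnt2⟩ := count n t (u.sort (· ≤ ·)) (m := ℓ + 1) (le_refl 1) huG (by omega)
  -- the `a`-expansion via the counting lemma
  have ha' : a = ∑ q ∈ Finset.range ℓ,
      (AA n ℓ t (u.sort (· ≤ ·)) q).choose (ℓ - q) := by
    rw [ha, setS1 hld huM, hcnt1, hulen]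
    refine Finset.sum_congr rfl fun q hq => ?_
    rw [show 1 + q = q + 1 by omega, show 1 + ℓ - 1 = ℓ by omega]
    rfl
  have ha2 : a = ∑ j ∈ Finset.Icc 1 ℓ,
      (AA n ℓ t (u.sort (· ≤ ·)) (ℓ - j)).choose j := by
    rw [ha']
    refine Finset.sum_nbij' (fun q => ℓ - q) (fun j => ℓ - j) ?_ ?_ ?_ ?_ ?_
    · intro q hq
      simp only [Finset.mem_range] at hq
      simp only [Finset.mem_Icc]
      omega
    · intro j hj
      simp only [Finset.mem_Icc] at hj
      simp only [Finset.mem_range]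
      omega
    · intro q hq
      simp only [Finset.mem_range] at hq
      show ℓ - (ℓ - q) = q
      omega
    · intro j hj
      simp only [Finset.mem_Icc] at hj
      show ℓ - (ℓ - j) = j
      omega
    · intro q hq
      simp only [Finset.mem_range] at hq
      rw [show ℓ - (ℓ - q) = q by omega]
  -- positivity of a
  have hapos : 0 < a := by
    have h1 : (c p).choose p ≤ a := by
      rw [hexp]
      exact Finset.single_le_sum (f := fun j => (c j).choose j)
        (fun j _ => Nat.zero_le _) (Finset.mem_Icc.mpr ⟨le_refl _, hpℓ⟩)
    have h2 : 0 < (c p).choose p := Nat.choose_pos hcp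
    omega
  -- existence of a nonzero term
  have hex : ∃ j, (1 ≤ j ∧ j ≤ ℓ) ∧ j ≤ AA n ℓ t (u.sort (· ≤ ·)) (ℓ - j) := by
    by_contra hcon
    push_neg at hcon
    have : ∑ j ∈ Finset.Icc 1 ℓ, (AA n ℓ t (u.sort (· ≤ ·)) (ℓ - j)).choose j = 0 := by
      refine Finset.sum_eq_zero fun j hj => ?_
      simp only [Finset.mem_Icc] at hj
      exact Nat.choose_eq_zero_of_lt (hcon j ⟨hj.1, hj.2⟩)
    omega
  set p' := Nat.find hex with hp'def
  have hp'spec := Nat.find_spec hex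
  have hp'min := fun m (hm : m < p') => Nat.find_min hex hm
  have hp'1 : 1 ≤ p' := hp'spec.1.1
  have hp'ℓ : p' ≤ ℓ := hp'spec.1.2
  have hDlow : ∀ j, 1 ≤ j → j < p' → AA n ℓ t (u.sort (· ≤ ·)) (ℓ - j) = j - 1 := by
    intro j hj1 hjp
    have h1 := hp'min j hjp
    push_neg at h1
    have h2 : AA n ℓ t (u.sort (· ≤ ·)) (ℓ - j) < j := h1 ⟨hj1, by omega⟩
    have h3 := AA_lb huG hulen (ℓ - j) (by omega)
    omega
  have ha3 : a = ∑ j ∈ Finset.Icc p' ℓ,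
      (AA n ℓ t (u.sort (· ≤ ·)) (ℓ - j)).choose j := by
    rw [ha2]
    refine (Finset.sum_subset (Finset.Icc_subset_Icc (by omega) (le_refl _)) ?_).symm
    intro j hj hj2
    simp only [Finset.mem_Icc] at hj hj2
    have hjp : j < p' := by omega
    rw [hDlow j hj.1 hjp]
    exact Nat.choose_eq_zero_of_lt (by omega)
  have hDmono : ∀ j k, p' ≤ j → j < k → k ≤ ℓ →
      AA n ℓ t (u.sort (· ≤ ·)) (ℓ - j) < AA n ℓ t (u.sort (· ≤ ·)) (ℓ - k) :=
    fun j k hj hjk hk => AA_dec huG hulen (ℓ - j) (ℓ - k) (by omega) (by omega)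
  obtain ⟨hpp', hcD⟩ := mac_unique ℓ hp1 hpℓ hp'1 hp'ℓ hmono hcp hDmono hp'spec.2
    (hexp.symm.trans ha3)
  -- the shadow-side count
  rw [setS2 hℓ huM, hcnt2, hulen]
  have hB : ∀ q, q < ℓ →
      (n + (ℓ + 1 - q)) - (((u.sort (· ≤ ·)).getD q 0) + 1 + ∑ h ∈ Finset.Ico (q + 1) (ℓ + 1), t h)
        = (AA n ℓ t (u.sort (· ≤ ·)) q + 1) - t ℓ := by
    intro q hq
    have hsplit : ∑ h ∈ Finset.Ico (q + 1) (ℓ + 1), t h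
        = (∑ h ∈ Finset.Ico (q + 1) ℓ, t h) + t ℓ :=
      Finset.sum_Ico_succ_top (by omega) _
    have hex1 := AA_exact huG hulen q hq
    omega
  have hstep1 : ∑ q ∈ Finset.range ℓ,
      ((n + (ℓ + 1 - q)) - (((u.sort (· ≤ ·)).getD q 0) + 1
          + ∑ h ∈ Finset.Ico (1 + q) (1 + (ℓ + 1) - 1), t h)).choose (ℓ + 1 - q)
      = ∑ j ∈ Finset.Icc 2 (ℓ + 1),
          ((AA n ℓ t (u.sort (· ≤ ·)) (ℓ + 1 - j) + 1) - t ℓ).choose j := by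
    refine Finset.sum_nbij' (fun q => ℓ + 1 - q) (fun j => ℓ + 1 - j) ?_ ?_ ?_ ?_ ?_
    · intro q hq
      simp only [Finset.mem_range] at hq
      simp only [Finset.mem_Icc]
      omega
    · intro j hj
      simp only [Finset.mem_Icc] at hj
      simp only [Finset.mem_range]
      omega
    · intro q hq
      simp only [Finset.mem_range] at hq
      show ℓ + 1 - (ℓ + 1 - q) = q
      omega
    · intro j hj
      simp only [Finset.mem_Icc] at hj
      show ℓ + 1 - (ℓ + 1 - j) = j
      omega
    · intro q hq
      simp only [Finset.mem_range] at hq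
      rw [show ℓ + 1 - (ℓ + 1 - q) = q by omega,
        show 1 + q = q + 1 by omega, show 1 + (ℓ + 1) - 1 = ℓ + 1 by omega,
        hB q hq]
  rw [hstep1]
  have hsub : Finset.Icc (p + 1) (ℓ + 1) ⊆ Finset.Icc 2 (ℓ + 1) :=
    Finset.Icc_subset_Icc (by omega) (le_refl _)
  rw [← Finset.sum_subset hsub ?zero]
  case zero =>
    intro j hj hj2
    simp only [Finset.mem_Icc] at hj hj2
    have hjp : j - 1 < p' := by omega
    rw [show ℓ + 1 - j = ℓ - (j - 1) by omega, hDlow (j - 1) (by omega) hjp]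
    exact Nat.choose_eq_zero_of_lt (by omega)
  refine Finset.sum_congr rfl fun j hj => ?_
  simp only [Finset.mem_Icc] at hj
  rw [show ℓ + 1 - j = ℓ - (j - 1) by omega, ← hcD (j - 1) (by omega) (by omega)]
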